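/- Let ω₁, ω₂ be points in the closed upper half-plane (including boundary ℝ ∪ {∞}) and Q_{ω₁}, Q_{ω₂} the corresponding quadratics Q_ω(X,Z) = (X - ωZ)(X - ω̄Z). For any s, t ≥ 0 with s + t = 1, the zero of sQ_{ω₁} + tQ_{ω₂} lies on the hyperbolic geodesic segment joining ω₁ and ω₂. -/

import Mathlib

/-- `p` lies on the hyperbolic geodesic segment joining `z` and `w` in the closed
upper half-plane: either all three lie on a vertical line with `p` between `z`
and `w`, or all three lie on a semicircle centered on the real axis with the real
part of `p` between those of `z` and `w`. -/
def OnHypSeg (z w p : ℂ) : Prop :=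
  0 ≤ p.im ∧
  ((z.re = w.re ∧ p.re = z.re ∧ p.im ∈ Set.uIcc z.im w.im) ∨
    (∃ c r : ℝ, ‖z - c‖ = r ∧ ‖w - c‖ = r ∧
      ‖p - c‖ = r ∧ p.re ∈ Set.uIcc z.re w.re))

lemma convex_mem_uIcc (a c s t : ℝ) (hs : 0 ≤ s) (ht : 0 ≤ t) (hst : s + t = 1) :
    s * a + t * c ∈ Set.uIcc a c := by
  have hs' : s = 1 - t := by linarith
  subst hs'
  rw [Set.mem_uIcc]
  rcases le_total a c with h | h
  · left
    constructor <;> nlinarith [mul_le_mul_of_nonneg_left h ht]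
  · right
    constructor <;> nlinarith [mul_le_mul_of_nonneg_left h ht]

lemma aux_zero_of_comb (a b c d : ℝ) (h₁ : 0 ≤ b) (h₂ : 0 ≤ d)
    (s t : ℝ) (hs : 0 ≤ s) (ht : 0 ≤ t) (hst : s + t = 1) :
    OnHypSeg ⟨a, b⟩ ⟨c, d⟩
      ((↑(s * a + t * c) : ℂ) +
        (↑(Real.sqrt ((s * (a ^ 2 + b ^ 2) + t * (c ^ 2 + d ^ 2)) - (s * a + t * c) ^ 2)) : ℝ)
          * Complex.I) := by
  have hs' : s = 1 - t := by linarith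
  subst hs'
  set P : ℝ := (1 - t) * a + t * c with hP
  set Q : ℝ := (1 - t) * (a ^ 2 + b ^ 2) + t * (c ^ 2 + d ^ 2) with hQ
  have hqp : Q - P ^ 2 = (1 - t) * t * (a - c) ^ 2 + (1 - t) * b ^ 2 + t * d ^ 2 := by
    simp only [hP, hQ]; ring
  have hqp0 : 0 ≤ Q - P ^ 2 := by
    rw [hqp]
    have h1t : 0 ≤ 1 - t := hs
    positivity
  have hsq : Real.sqrt (Q - P ^ 2) ^ 2 = Q - P ^ 2 := Real.sq_sqrt hqp0
  have him : ((↑P : ℂ) + (↑(Real.sqrt (Q - P ^ 2)) : ℝ) * Complex.I).im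
      = Real.sqrt (Q - P ^ 2) := by simp
  have hre : ((↑P : ℂ) + (↑(Real.sqrt (Q - P ^ 2)) : ℝ) * Complex.I).re = P := by simp
  constructor
  · rw [him]; positivity
  by_cases hac : a = c
  · -- vertical line case
    left
    subst hac
    refine ⟨rfl, by rw [hre]; simp [hP]; ring, ?_⟩
    rw [him]
    have hQP : Q - P ^ 2 = (1 - t) * b ^ 2 + t * d ^ 2 := by rw [hqp]; ring
    rw [hQP, Set.mem_uIcc]
    rcases le_total b d with h | h
    · have hbd : b ^ 2 ≤ d ^ 2 := pow_le_pow_left₀ h₁ h 2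
      have hm := mul_le_mul_of_nonneg_left hbd hs
      have hm' := mul_le_mul_of_nonneg_left hbd ht
      left
      constructor
      · calc b = Real.sqrt (b ^ 2) := (Real.sqrt_sq h₁).symm
          _ ≤ Real.sqrt ((1 - t) * b ^ 2 + t * d ^ 2) :=
              Real.sqrt_le_sqrt (by linarith)
      · calc Real.sqrt ((1 - t) * b ^ 2 + t * d ^ 2) ≤ Real.sqrt (d ^ 2) :=
              Real.sqrt_le_sqrt (by linarith)
          _ = d := Real.sqrt_sq h₂
    · have hbd : d ^ 2 ≤ b ^ 2 := pow_le_pow_left₀ h₂ h 2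
      have hm := mul_le_mul_of_nonneg_left hbd hs
      have hm' := mul_le_mul_of_nonneg_left hbd ht
      right
      constructor
      · calc d = Real.sqrt (d ^ 2) := (Real.sqrt_sq h₂).symm
          _ ≤ Real.sqrt ((1 - t) * b ^ 2 + t * d ^ 2) :=
              Real.sqrt_le_sqrt (by linarith)
      · calc Real.sqrt ((1 - t) * b ^ 2 + t * d ^ 2) ≤ Real.sqrt (b ^ 2) :=
              Real.sqrt_le_sqrt (by linarith)
          _ = b := Real.sqrt_sq h₁
  · -- semicircle case
    right
    have hac' : (a - c) ≠ 0 := sub_ne_zero.mpr hac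
    set x₀ : ℝ := ((a ^ 2 + b ^ 2) - (c ^ 2 + d ^ 2)) / (2 * (a - c)) with hx₀
    have h2ac : 2 * (a - c) ≠ 0 := mul_ne_zero two_ne_zero hac'
    have h0 : x₀ * (2 * (a - c)) = (a ^ 2 + b ^ 2) - (c ^ 2 + d ^ 2) := by
      rw [hx₀]; exact div_mul_cancel₀ _ h2ac
    refine ⟨x₀, Real.sqrt ((a - x₀) ^ 2 + b ^ 2), ?_, ?_, ?_, ?_⟩
    · rw [Complex.norm_def, Complex.normSq_apply]
      simp only [Complex.sub_re, Complex.sub_im, Complex.ofReal_re, Complex.ofReal_im]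
      congr 1; ring
    · rw [Complex.norm_def, Complex.normSq_apply]
      simp only [Complex.sub_re, Complex.sub_im, Complex.ofReal_re, Complex.ofReal_im]
      congr 1
      linear_combination h0
    · rw [Complex.norm_def, Complex.normSq_apply]
      simp only [Complex.add_re, Complex.sub_re, Complex.add_im, Complex.sub_im,
        Complex.ofReal_re, Complex.ofReal_im, Complex.mul_re, Complex.mul_im,
        Complex.I_re, Complex.I_im]
      congr 1
      have hQ' := hQ
      have hP' := hP
      linear_combination hsq + t * h0
    · rw [hre]
      exact convex_mem_uIcc a c (1 - t) t hs ht (by ring)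

theorem zero_of_comb_on_segment (ω₁ ω₂ : ℂ) (h₁ : 0 ≤ ω₁.im) (h₂ : 0 ≤ ω₂.im)
    (s t : ℝ) (hs : 0 ≤ s) (ht : 0 ≤ t) (hst : s + t = 1) :
    let p := s * ω₁.re + t * ω₂.re
    let q := s * ‖ω₁‖ ^ 2 + t * ‖ω₂‖ ^ 2
    OnHypSeg ω₁ ω₂ ((p : ℂ) + (Real.sqrt (q - p ^ 2) : ℝ) * Complex.I) := by
  intro p q
  have habs1 : ‖ω₁‖ ^ 2 = ω₁.re ^ 2 + ω₁.im ^ 2 := by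
    rw [Complex.sq_norm, Complex.normSq_apply]; ring
  have habs2 : ‖ω₂‖ ^ 2 = ω₂.re ^ 2 + ω₂.im ^ 2 := by
    rw [Complex.sq_norm, Complex.normSq_apply]; ring
  have hq : q = s * (ω₁.re ^ 2 + ω₁.im ^ 2) + t * (ω₂.re ^ 2 + ω₂.im ^ 2) := by
    simp only [q, habs1, habs2]
  have key := aux_zero_of_comb ω₁.re ω₁.im ω₂.re ω₂.im h₁ h₂ s t hs ht hst
  have hz : (⟨ω₁.re, ω₁.im⟩ : ℂ) = ω₁ := rfl
  have hw : (⟨ω₂.re, ω₂.im⟩ : ℂ) = ω₂ := rfl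
  rw [hz, hw] at key
  convert key using 4 <;> rw [hq]
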